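/- Let (Ω, Σ) be a measurable space, H and K separable complex Hilbert spaces, M ∈ O_Σ(H) an observable and E ∈ C(K;H) a channel that are compatible. If M is extremal in O_Σ(H) and E is extremal in C(K;H), then their unique joint instrument Γ is extremal in the convex set I_Σ(K;H) of instruments. -/

import Mathlib

open scoped ComplexOrder ComplexInnerProductSpace Topology

noncomputable section

/-- A linear map `Φ : A → L(H)` from a `*`-algebra into the bounded operators on a complex
Hilbert space `H` is *completely positive* if for all `n`, `a₁, …, aₙ ∈ A` and
`φ₁, …, φₙ ∈ H` one has `∑ j k, ⟪φ j, Φ (star (a j) * a k) (φ k)⟫ ≥ 0`. -/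
def IsCompletelyPositive {A : Type*} [NonUnitalNonAssocSemiring A] [StarRing A] [Module ℂ A]
    {H : Type*} [NormedAddCommGroup H] [InnerProductSpace ℂ H]
    (Φ : A →ₗ[ℂ] H →L[ℂ] H) : Prop :=
  ∀ (n : ℕ) (a : Fin n → A) (v : Fin n → H),
    0 ≤ ∑ j, ∑ k, ⟪v j, Φ (star (a j) * a k) (v k)⟫

/-- The convex set `CP_P(A;H)` of completely positive maps `Φ : A → L(H)` with `Φ 1 = P`. -/
def CPWithUnit (A : Type*) [Ring A] [StarRing A] [Algebra ℂ A]
    (H : Type*) [NormedAddCommGroup H] [InnerProductSpace ℂ H]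
    (P : H →L[ℂ] H) : Set (A →ₗ[ℂ] H →L[ℂ] H) :=
  {Φ | IsCompletelyPositive Φ ∧ Φ 1 = P}

/-- `x` is an extremal point of the convex set `S`: whenever `x` is a nontrivial convex
combination of two members of `S`, they coincide. -/
def IsExtremalIn {V : Type*} [AddCommMonoid V] [Module ℂ V] (S : Set V) (x : V) : Prop :=
  x ∈ S ∧ ∀ y ∈ S, ∀ z ∈ S, ∀ t : ℝ, 0 < t → t < 1 →
    x = (t : ℂ) • y + ((1 - t : ℝ) : ℂ) • z → y = z

/-- The σ-weak (ultraweak) topology on `L(E)`, i.e. the coarsest topology making all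
functionals `T ↦ ∑' n, ⟪x n, T (y n)⟫` (with `x, y` square-summable sequences) continuous. -/
def sigmaWeakTopology (E : Type*) [NormedAddCommGroup E] [InnerProductSpace ℂ E] :
    TopologicalSpace (E →L[ℂ] E) :=
  ⨅ (x : ℕ → E) (y : ℕ → E) (_ : Summable fun n => ‖x n‖ ^ 2)
    (_ : Summable fun n => ‖y n‖ ^ 2),
    TopologicalSpace.induced (fun T : E →L[ℂ] E => ∑' n, ⟪x n, T (y n)⟫) inferInstance

/-- A map `Φ : L(K) → L(H)` is *normal* if it is continuous with respect to the
σ-weak (ultraweak) topologies. -/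
def IsNormalMap {K H : Type*} [NormedAddCommGroup K] [InnerProductSpace ℂ K]
    [NormedAddCommGroup H] [InnerProductSpace ℂ H]
    (Φ : (K →L[ℂ] K) →ₗ[ℂ] (H →L[ℂ] H)) : Prop :=
  Continuous[sigmaWeakTopology K, sigmaWeakTopology H] ⇑Φ

/-- A channel (in the Heisenberg picture) from `H` to `K` is a normal unital completely
positive map `L(K) → L(H)`. -/
def IsChannel {K H : Type*} [NormedAddCommGroup K] [InnerProductSpace ℂ K] [CompleteSpace K]
    [NormedAddCommGroup H] [InnerProductSpace ℂ H] [CompleteSpace H]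
    (Φ : (K →L[ℂ] K) →ₗ[ℂ] (H →L[ℂ] H)) : Prop :=
  IsCompletelyPositive Φ ∧ IsNormalMap Φ ∧ Φ 1 = 1

/-- The convex set `C(K;H)` of channels. -/
def ChannelSet (K H : Type*) [NormedAddCommGroup K] [InnerProductSpace ℂ K] [CompleteSpace K]
    [NormedAddCommGroup H] [InnerProductSpace ℂ H] [CompleteSpace H] :
    Set ((K →L[ℂ] K) →ₗ[ℂ] (H →L[ℂ] H)) :=
  {Φ | IsChannel Φ}

/-- A normalized positive operator valued measure (POVM, observable) on the measurable
space `Ω` with values in `L(H)`: positive operator values, `M univ = 1`, and σ-additivity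
in the weak operator topology. -/
def IsPOVM {Ω : Type*} [MeasurableSpace Ω] {H : Type*}
    [NormedAddCommGroup H] [InnerProductSpace ℂ H] [CompleteSpace H]
    (M : Set Ω → H →L[ℂ] H) : Prop :=
  (∀ X : Set Ω, MeasurableSet X → (M X).IsPositive) ∧
  M Set.univ = 1 ∧
  ∀ f : ℕ → Set Ω, (∀ n, MeasurableSet (f n)) → Pairwise (Function.onFun Disjoint f) →
    ∀ x y : H, HasSum (fun n => ⟪x, M (f n) y⟫) ⟪x, M (⋃ n, f n) y⟫

/-- A POVM is extremal in the convex set of all POVMs on the same σ-algebra. -/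
def IsExtremalPOVM {Ω : Type*} [MeasurableSpace Ω] {H : Type*}
    [NormedAddCommGroup H] [InnerProductSpace ℂ H] [CompleteSpace H]
    (M : Set Ω → H →L[ℂ] H) : Prop :=
  IsPOVM M ∧ ∀ M₁ M₂ : Set Ω → H →L[ℂ] H, IsPOVM M₁ → IsPOVM M₂ →
    ∀ t : ℝ, 0 < t → t < 1 →
    (∀ X : Set Ω, MeasurableSet X → M X = (t : ℂ) • M₁ X + ((1 - t : ℝ) : ℂ) • M₂ X) →
    ∀ X : Set Ω, MeasurableSet X → M₁ X = M₂ X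

/-- An instrument `Γ ∈ I_Σ(K;H)`: a map `Γ : Σ × L(K) → L(H)` such that each
`Γ(X, ·)` is a normal completely positive linear map, `Γ(·, B)` is an operator measure
(σ-additive in the weak operator topology) for every `B`, `Γ(·, 1)` is a POVM and
`Γ(Ω, ·)` is a channel. -/
def IsInstrument {Ω : Type*} [MeasurableSpace Ω] {K H : Type*}
    [NormedAddCommGroup K] [InnerProductSpace ℂ K] [CompleteSpace K]
    [NormedAddCommGroup H] [InnerProductSpace ℂ H] [CompleteSpace H]
    (Γ : Set Ω → ((K →L[ℂ] K) →ₗ[ℂ] (H →L[ℂ] H))) : Prop :=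
  (∀ X : Set Ω, MeasurableSet X → IsCompletelyPositive (Γ X)) ∧
  (∀ X : Set Ω, MeasurableSet X → IsNormalMap (Γ X)) ∧
  IsPOVM (fun X => Γ X 1) ∧
  (∀ (B : K →L[ℂ] K) (f : ℕ → Set Ω), (∀ n, MeasurableSet (f n)) →
    Pairwise (Function.onFun Disjoint f) → ∀ x y : H,
      HasSum (fun n => ⟪x, Γ (f n) B y⟫) ⟪x, Γ (⋃ n, f n) B y⟫) ∧
  IsChannel (Γ Set.univ)

/-- An instrument is extremal in the convex set `I_Σ(K;H)` of all instruments. -/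
def IsExtremalInstrument {Ω : Type*} [MeasurableSpace Ω] {K H : Type*}
    [NormedAddCommGroup K] [InnerProductSpace ℂ K] [CompleteSpace K]
    [NormedAddCommGroup H] [InnerProductSpace ℂ H] [CompleteSpace H]
    (Γ : Set Ω → ((K →L[ℂ] K) →ₗ[ℂ] (H →L[ℂ] H))) : Prop :=
  IsInstrument Γ ∧ ∀ Γ₁ Γ₂ : Set Ω → ((K →L[ℂ] K) →ₗ[ℂ] (H →L[ℂ] H)),
    IsInstrument Γ₁ → IsInstrument Γ₂ → ∀ t : ℝ, 0 < t → t < 1 →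
    (∀ X : Set Ω, MeasurableSet X → Γ X = (t : ℂ) • Γ₁ X + ((1 - t : ℝ) : ℂ) • Γ₂ X) →
    ∀ X : Set Ω, MeasurableSet X → Γ₁ X = Γ₂ X

/-- The observable `M` and the channel `E` are compatible with joint instrument `Γ`:
`Γ(X, 1) = M X` for all measurable `X` and `Γ(Ω, ·) = E`. -/
def IsJointInstrument {Ω : Type*} [MeasurableSpace Ω] {K H : Type*}
    [NormedAddCommGroup K] [InnerProductSpace ℂ K] [CompleteSpace K]
    [NormedAddCommGroup H] [InnerProductSpace ℂ H] [CompleteSpace H]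
    (Γ : Set Ω → ((K →L[ℂ] K) →ₗ[ℂ] (H →L[ℂ] H)))
    (M : Set Ω → H →L[ℂ] H) (E : (K →L[ℂ] K) →ₗ[ℂ] (H →L[ℂ] H)) : Prop :=
  IsInstrument Γ ∧ (∀ X : Set Ω, MeasurableSet X → Γ X 1 = M X) ∧ Γ Set.univ = E

section Aux

variable {Ω : Type*} [MeasurableSpace Ω] {K H : Type*}
    [NormedAddCommGroup K] [InnerProductSpace ℂ K] [CompleteSpace K]
    [NormedAddCommGroup H] [InnerProductSpace ℂ H] [CompleteSpace H]

lemma instrument_empty (Γ : Set Ω → ((K →L[ℂ] K) →ₗ[ℂ] (H →L[ℂ] H)))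
    (hΓ : IsInstrument Γ) : Γ (∅ : Set Ω) = 0 := by
  obtain ⟨-, -, -, hadd, -⟩ := hΓ
  apply LinearMap.ext; intro B
  apply ContinuousLinearMap.ext; intro y
  apply ext_inner_left ℂ; intro x
  have h := hadd B (fun _ => (∅ : Set Ω)) (fun _ => MeasurableSet.empty)
    (by intro i j hij; simp [Function.onFun]) x y
  simp only [Set.iUnion_empty] at h
  have h0 := tendsto_nhds_unique tendsto_const_nhds h.summable.tendsto_atTop_zero
  simpa using h0

lemma instrument_add_compl (Γ : Set Ω → ((K →L[ℂ] K) →ₗ[ℂ] (H →L[ℂ] H)))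
    (hΓ : IsInstrument Γ) {X : Set Ω} (hX : MeasurableSet X) :
    Γ X + Γ Xᶜ = Γ Set.univ := by
  classical
  have hzero : Γ (∅ : Set Ω) = 0 := instrument_empty Γ hΓ
  apply LinearMap.ext; intro B
  apply ContinuousLinearMap.ext; intro y
  apply ext_inner_left ℂ; intro x
  set f : ℕ → Set Ω := fun n => if n = 0 then X else if n = 1 then Xᶜ else ∅ with hf
  have hmeas : ∀ n, MeasurableSet (f n) := by
    intro n; simp only [hf]
    split_ifs with h1 h2
    · exact hX
    · exact hX.compl
    · exact MeasurableSet.empty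
  have hdisj : Pairwise (Function.onFun Disjoint f) := by
    intro i j hij
    simp only [Function.onFun, hf]
    split_ifs <;>
      first
        | omega
        | exact disjoint_compl_right
        | exact disjoint_compl_left
        | exact disjoint_bot_left
        | exact disjoint_bot_right
  have huniv : (⋃ n, f n) = Set.univ := by
    ext z
    simp only [Set.mem_iUnion, Set.mem_univ, iff_true]
    by_cases hz : z ∈ X
    · exact ⟨0, by simpa [hf]⟩
    · exact ⟨1, by simpa [hf]⟩
  have hsum := hΓ.2.2.2.1 B f hmeas hdisj x y
  rw [huniv] at hsum
  have hg : (fun n => ⟪x, Γ (f n) B y⟫) =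
      fun n => (if n = 0 then ⟪x, Γ X B y⟫ else 0) + (if n = 1 then ⟪x, Γ Xᶜ B y⟫ else 0) := by
    funext n
    rcases n with _ | _ | n <;> simp [hf, hzero]
  have hsum2 : HasSum (fun n => ⟪x, Γ (f n) B y⟫) (⟪x, Γ X B y⟫ + ⟪x, Γ Xᶜ B y⟫) := by
    rw [hg]; exact (hasSum_ite_eq 0 _).add (hasSum_ite_eq 1 _)
  have hval := hsum2.unique hsum
  rw [LinearMap.add_apply, ContinuousLinearMap.add_apply, inner_add_right, hval]

lemma summable_inner_apply {E : Type*} [NormedAddCommGroup E] [InnerProductSpace ℂ E]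
    (x y : ℕ → E) (hx : Summable fun n => ‖x n‖ ^ 2) (hy : Summable fun n => ‖y n‖ ^ 2)
    (T : E →L[ℂ] E) : Summable fun n => ⟪x n, T (y n)⟫ := by
  apply Summable.of_norm
  have hb : Summable fun n => ‖T‖ * (‖x n‖ ^ 2 + ‖y n‖ ^ 2) := (hx.add hy).mul_left _
  refine Summable.of_nonneg_of_le (fun n => norm_nonneg _) (fun n => ?_) hb
  calc ‖⟪x n, T (y n)⟫‖ ≤ ‖x n‖ * ‖T (y n)‖ := norm_inner_le_norm _ _
    _ ≤ ‖x n‖ * (‖T‖ * ‖y n‖) := by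
        have := T.le_opNorm (y n)
        exact mul_le_mul_of_nonneg_left this (norm_nonneg _)
    _ = ‖T‖ * (‖x n‖ * ‖y n‖) := by ring
    _ ≤ ‖T‖ * (‖x n‖ ^ 2 + ‖y n‖ ^ 2) := by
        have h1 : ‖x n‖ * ‖y n‖ ≤ ‖x n‖ ^ 2 + ‖y n‖ ^ 2 := by
          nlinarith [sq_nonneg (‖x n‖ - ‖y n‖), norm_nonneg (x n), norm_nonneg (y n)]
        exact mul_le_mul_of_nonneg_left h1 (norm_nonneg _)

lemma isNormalMap_add {Φ Ψ : (K →L[ℂ] K) →ₗ[ℂ] (H →L[ℂ] H)}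
    (hΦ : IsNormalMap Φ) (hΨ : IsNormalMap Ψ) : IsNormalMap (Φ + Ψ) := by
  unfold IsNormalMap
  rw [sigmaWeakTopology.eq_1 H, continuous_iInf_rng]
  intro x
  rw [continuous_iInf_rng]; intro y
  rw [continuous_iInf_rng]; intro hx
  rw [continuous_iInf_rng]; intro hy
  rw [continuous_induced_rng]
  have key : (fun T : H →L[ℂ] H => ∑' n, ⟪x n, T (y n)⟫) ∘ ⇑(Φ + Ψ)
      = fun T => (∑' n, ⟪x n, (Φ T) (y n)⟫) + ∑' n, ⟪x n, (Ψ T) (y n)⟫ := by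
    funext T
    simp only [Function.comp_apply, LinearMap.add_apply, ContinuousLinearMap.add_apply,
      inner_add_right]
    exact Summable.tsum_add (summable_inner_apply x y hx hy _) (summable_inner_apply x y hx hy _)
  rw [key]
  have hc : ∀ Θ : (K →L[ℂ] K) →ₗ[ℂ] (H →L[ℂ] H), IsNormalMap Θ →
      Continuous[sigmaWeakTopology K, inferInstance]
        (fun T => ∑' n, ⟪x n, (Θ T) (y n)⟫) := by
    intro Θ hΘ
    have hℓ : Continuous[sigmaWeakTopology H, inferInstance]
        (fun S : H →L[ℂ] H => ∑' n, ⟪x n, S (y n)⟫) := by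
      rw [continuous_iff_le_induced, sigmaWeakTopology]
      exact le_trans (iInf_le _ x) (le_trans (iInf_le _ y)
        (le_trans (iInf_le _ hx) (iInf_le _ hy)))
    letI : TopologicalSpace (K →L[ℂ] K) := sigmaWeakTopology K
    letI : TopologicalSpace (H →L[ℂ] H) := sigmaWeakTopology H
    exact hℓ.comp hΘ
  letI : TopologicalSpace (K →L[ℂ] K) := sigmaWeakTopology K
  exact Continuous.add (hc Φ hΦ) (hc Ψ hΨ)

lemma isCompletelyPositive_add {Φ Ψ : (K →L[ℂ] K) →ₗ[ℂ] (H →L[ℂ] H)}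
    (hΦ : IsCompletelyPositive Φ) (hΨ : IsCompletelyPositive Ψ) :
    IsCompletelyPositive (Φ + Ψ) := by
  intro n a v
  have h := add_nonneg (hΦ n a v) (hΨ n a v)
  simpa [LinearMap.add_apply, ContinuousLinearMap.add_apply, inner_add_right,
    Finset.sum_add_distrib] using h

/-- Key uniqueness lemma: two instruments with the same observable marginal and the same,
*extremal*, channel marginal coincide on measurable sets. -/
lemma joint_unique (Γ₁ Γ₂ : Set Ω → ((K →L[ℂ] K) →ₗ[ℂ] (H →L[ℂ] H)))
    (h₁ : IsInstrument Γ₁) (h₂ : IsInstrument Γ₂)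
    (hobs : ∀ X : Set Ω, MeasurableSet X → Γ₁ X 1 = Γ₂ X 1)
    (hch : Γ₁ Set.univ = Γ₂ Set.univ)
    (hext : IsExtremalIn (ChannelSet K H) (Γ₁ Set.univ)) :
    ∀ X : Set Ω, MeasurableSet X → Γ₁ X = Γ₂ X := by
  intro X hX
  set a := Γ₁ X with ha
  set b := Γ₁ Xᶜ with hb
  set c := Γ₂ X with hc
  set d := Γ₂ Xᶜ with hd
  have hB1 : a + b = Γ₁ Set.univ := instrument_add_compl Γ₁ h₁ hX
  have hB2 : c + d = Γ₂ Set.univ := instrument_add_compl Γ₂ h₂ hX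
  have hE' : (a + d) ∈ ChannelSet K H := by
    refine ⟨isCompletelyPositive_add (h₁.1 X hX) (h₂.1 Xᶜ hX.compl),
      isNormalMap_add (h₁.2.1 X hX) (h₂.2.1 Xᶜ hX.compl), ?_⟩
    have h1 : a 1 = c 1 := hobs X hX
    rw [LinearMap.add_apply, h1, ← LinearMap.add_apply, hB2]
    exact h₂.2.2.2.2.2.2
  have hE'' : (c + b) ∈ ChannelSet K H := by
    refine ⟨isCompletelyPositive_add (h₂.1 X hX) (h₁.1 Xᶜ hX.compl),
      isNormalMap_add (h₂.2.1 X hX) (h₁.2.1 Xᶜ hX.compl), ?_⟩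
    have h1 : c 1 = a 1 := (hobs X hX).symm
    rw [LinearMap.add_apply, h1, ← LinearMap.add_apply, hB1]
    exact h₁.2.2.2.2.2.2
  have hcombo : Γ₁ Set.univ
      = (((1:ℝ)/2 : ℝ) : ℂ) • (a + d) + ((1 - (1:ℝ)/2 : ℝ) : ℂ) • (c + b) := by
    have h12 : ((1 - (1:ℝ)/2 : ℝ) : ℂ) = (((1:ℝ)/2 : ℝ) : ℂ) := by norm_num
    rw [h12]
    have hsw : (((1:ℝ)/2 : ℝ) : ℂ) • (a + d) + (((1:ℝ)/2 : ℝ) : ℂ) • (c + b)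
        = (((1:ℝ)/2 : ℝ) : ℂ) • (a + b) + (((1:ℝ)/2 : ℝ) : ℂ) • (c + d) := by
      rw [smul_add, smul_add, smul_add, smul_add]; abel
    rw [hsw, hB1, hB2, ← hch, ← add_smul]
    norm_num
  have heq : a + d = c + b :=
    hext.2 (a + d) hE' (c + b) hE'' ((1:ℝ)/2) (by norm_num) (by norm_num) hcombo
  have h2' : a + b = c + d := by rw [hB1, hB2, hch]
  have hsum : (2:ℂ) • a = (2:ℂ) • c := by
    have hadd := congrArg₂ (· + ·) heq h2'
    rw [two_smul, two_smul]
    have hcan : a + a + (b + d) = c + c + (b + d) := by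
      calc a + a + (b + d) = a + d + (a + b) := by abel
        _ = c + b + (c + d) := hadd
        _ = c + c + (b + d) := by abel
    exact add_right_cancel hcan
  have h5 := congrArg (fun z => ((2:ℂ)⁻¹) • z) hsum
  simp only [smul_smul] at h5
  rw [inv_mul_cancel₀ (by norm_num : (2:ℂ) ≠ 0), one_smul, one_smul] at h5
  exact h5

end Aux


/-- **Extremality of the joint instrument** (item (f) of the paper). Let `M` be an
observable and `E` a channel that are compatible, with joint instrument `Γ`. If `M` is
extremal among POVMs and `E` is extremal among channels, then the joint instrument is
unique and extremal in the convex set `I_Σ(K;H)` of instruments. -/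
theorem joint_instrument_extremal_of_extremal_marginals
    {Ω : Type*} [MeasurableSpace Ω] {K H : Type*}
    [NormedAddCommGroup K] [InnerProductSpace ℂ K] [CompleteSpace K]
    [TopologicalSpace.SeparableSpace K]
    [NormedAddCommGroup H] [InnerProductSpace ℂ H] [CompleteSpace H]
    [TopologicalSpace.SeparableSpace H]
    (M : Set Ω → H →L[ℂ] H) (hM : IsPOVM M)
    (E : (K →L[ℂ] K) →ₗ[ℂ] (H →L[ℂ] H)) (hE : E ∈ ChannelSet K H)
    (Γ : Set Ω → ((K →L[ℂ] K) →ₗ[ℂ] (H →L[ℂ] H)))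
    (hΓ : IsJointInstrument Γ M E)
    (hextM : IsExtremalPOVM M) (hextE : IsExtremalIn (ChannelSet K H) E) :
    (∀ Γ' : Set Ω → ((K →L[ℂ] K) →ₗ[ℂ] (H →L[ℂ] H)), IsJointInstrument Γ' M E →
      ∀ X : Set Ω, MeasurableSet X → Γ' X = Γ X) ∧
    IsExtremalInstrument Γ := by
  obtain ⟨hΓinst, hΓM, hΓE⟩ := hΓ
  have huniq : ∀ Γ' : Set Ω → ((K →L[ℂ] K) →ₗ[ℂ] (H →L[ℂ] H)), IsJointInstrument Γ' M E →
      ∀ X : Set Ω, MeasurableSet X → Γ' X = Γ X := by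
    rintro Γ' ⟨h'inst, h'M, h'E⟩
    have hext' : IsExtremalIn (ChannelSet K H) (Γ' Set.univ) := by rw [h'E]; exact hextE
    exact joint_unique Γ' Γ h'inst hΓinst
      (fun X hX => (h'M X hX).trans (hΓM X hX).symm) (by rw [h'E, hΓE]) hext'
  refine ⟨huniq, hΓinst, ?_⟩
  intro Γ₁ Γ₂ h1 h2 t ht0 ht1 hcombo X hX
  have hM12 : ∀ Y : Set Ω, MeasurableSet Y → Γ₁ Y 1 = Γ₂ Y 1 := by
    apply hextM.2 (fun Y => Γ₁ Y 1) (fun Y => Γ₂ Y 1) h1.2.2.1 h2.2.2.1 t ht0 ht1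
    intro Y hY
    rw [← hΓM Y hY, hcombo Y hY]
    simp [LinearMap.add_apply, LinearMap.smul_apply]
  have hch : Γ₁ Set.univ = Γ₂ Set.univ := by
    apply hextE.2 (Γ₁ Set.univ) h1.2.2.2.2 (Γ₂ Set.univ) h2.2.2.2.2 t ht0 ht1
    rw [← hΓE]; exact hcombo Set.univ MeasurableSet.univ
  have hE1 : Γ₁ Set.univ = E := by
    have hone : (t : ℂ) + ((1 - t : ℝ) : ℂ) = 1 := by push_cast; ring
    rw [← hΓE, hcombo Set.univ MeasurableSet.univ, ← hch, ← add_smul, hone, one_smul]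
  have hextE1 : IsExtremalIn (ChannelSet K H) (Γ₁ Set.univ) := by rw [hE1]; exact hextE
  exact joint_unique Γ₁ Γ₂ h1 h2 hM12 hch hextE1 X hX
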